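/- Let g ∈ C² on a compact set containing the relevant trajectory, with ∇g Lipschitz with constant L_{∇g}. Suppose the continuous transversality bound 0 < α² ≤ ∇g(x*) · f(t*, x*) holds, the discrete vector field fᵗ satisfies the consistency bound ‖f(t*, x*) - fᵗ(t, y, s, z)‖ ≤ C₃ τᵖ whenever t, s ∈ B(t*, C₁τ₀) and y, z ∈ B(x*, C₂τ₀ᵖ), and ‖fᵗ‖ ≤ M₁ uniformly. Then for all sufficiently small τ > 0 and all x ∈ B(x*, C₂τᵖ), t, s ∈ B(t*, C₁τ), y, z ∈ B(x*, C₂τᵖ): ∇g(x) · fᵗ(t, y, s, z) ≥ α² - (C₃‖∇g(x*)‖ + C₂ L_{∇g} M₁) τᵖ > 0. -/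

import Mathlib

theorem discrete_transversality {d : ℕ}
    (G : EuclideanSpace ℝ (Fin d) → EuclideanSpace ℝ (Fin d))
    (fτ : ℝ → EuclideanSpace ℝ (Fin d) → ℝ → EuclideanSpace ℝ (Fin d) →
      EuclideanSpace ℝ (Fin d))
    (fstar : EuclideanSpace ℝ (Fin d)) (xstar : EuclideanSpace ℝ (Fin d))
    (tstar α LG C₁ C₂ C₃ M₁ τ₀ : ℝ) (p : ℕ)
    (hα : α ≠ 0) (hLG : 0 < LG) (hC₁ : 0 < C₁) (hC₂ : 0 < C₂) (hC₃ : 0 < C₃)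
    (hM₁pos : 0 < M₁) (hτ₀ : 0 < τ₀) (hp : 1 ≤ p)
    (hGLip : ∀ x y, ‖G x - G y‖ ≤ LG * ‖x - y‖)
    (htrans : α ^ 2 ≤ (inner ℝ (G xstar) fstar : ℝ))
    (hcons : ∀ τ : ℝ, 0 < τ → τ ≤ τ₀ →
      ∀ t ∈ Metric.closedBall tstar (C₁ * τ₀),
      ∀ s ∈ Metric.closedBall tstar (C₁ * τ₀),
      ∀ y ∈ Metric.closedBall xstar (C₂ * τ₀ ^ p),
      ∀ z ∈ Metric.closedBall xstar (C₂ * τ₀ ^ p),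
        ‖fstar - fτ t y s z‖ ≤ C₃ * τ ^ p)
    (hbd : ∀ t y s z, ‖fτ t y s z‖ ≤ M₁) :
    ∃ τ₁ : ℝ, 0 < τ₁ ∧ τ₁ ≤ τ₀ ∧
      ∀ τ : ℝ, 0 < τ → τ ≤ τ₁ →
      ∀ x ∈ Metric.closedBall xstar (C₂ * τ ^ p),
      ∀ t ∈ Metric.closedBall tstar (C₁ * τ),
      ∀ s ∈ Metric.closedBall tstar (C₁ * τ),
      ∀ y ∈ Metric.closedBall xstar (C₂ * τ ^ p),
      ∀ z ∈ Metric.closedBall xstar (C₂ * τ ^ p),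
        α ^ 2 - (C₃ * ‖G xstar‖ + C₂ * LG * M₁) * τ ^ p ≤ (inner ℝ (G x) (fτ t y s z) : ℝ) ∧
        0 < α ^ 2 - (C₃ * ‖G xstar‖ + C₂ * LG * M₁) * τ ^ p := by
  set K : ℝ := C₃ * ‖G xstar‖ + C₂ * LG * M₁ with hKdef
  have hGnn : (0:ℝ) ≤ ‖G xstar‖ := norm_nonneg _
  have hK : 0 < K := by positivity
  have hα2 : 0 < α ^ 2 := by
    have := abs_pos.mpr hα
    nlinarith [sq_abs α]
  refine ⟨min τ₀ (min 1 (α ^ 2 / (2 * K))), by positivity, min_le_left _ _, ?_⟩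
  intro τ hτ hτ1 x hx t ht s hs y hy z hz
  have hττ₀ : τ ≤ τ₀ := le_trans hτ1 (min_le_left _ _)
  have hτle1 : τ ≤ 1 := le_trans hτ1 (le_trans (min_le_right _ _) (min_le_left _ _))
  have hτleα : τ ≤ α ^ 2 / (2 * K) :=
    le_trans hτ1 (le_trans (min_le_right _ _) (min_le_right _ _))
  have hτp_le_τ : τ ^ p ≤ τ := by
    calc τ ^ p ≤ τ ^ 1 := pow_le_pow_of_le_one hτ.le hτle1 hp
    _ = τ := pow_one τ
  have hτp_pos : 0 < τ ^ p := pow_pos hτ p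
  have hpos : 0 < α ^ 2 - K * τ ^ p := by
    have : K * τ ^ p ≤ K * τ := by nlinarith
    have h2 : K * τ ≤ α ^ 2 / 2 := by
      rw [le_div_iff₀ (by positivity : (0:ℝ) < 2*K)] at hτleα
      nlinarith
    nlinarith
  have hτpτ₀p : τ ^ p ≤ τ₀ ^ p := pow_le_pow_left₀ hτ.le hττ₀ p
  -- membership in larger balls
  have ht' : t ∈ Metric.closedBall tstar (C₁ * τ₀) :=
    Metric.closedBall_subset_closedBall (by nlinarith) ht
  have hs' : s ∈ Metric.closedBall tstar (C₁ * τ₀) :=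
    Metric.closedBall_subset_closedBall (by nlinarith) hs
  have hy' : y ∈ Metric.closedBall xstar (C₂ * τ₀ ^ p) :=
    Metric.closedBall_subset_closedBall (by nlinarith) hy
  have hz' : z ∈ Metric.closedBall xstar (C₂ * τ₀ ^ p) :=
    Metric.closedBall_subset_closedBall (by nlinarith) hz
  have hcons' := hcons τ hτ hττ₀ t ht' s hs' y hy' z hz'
  have hxnorm : ‖x - xstar‖ ≤ C₂ * τ ^ p := by
    rw [Metric.mem_closedBall, dist_eq_norm] at hx; exact hx
  set f := fτ t y s z with hfdef
  have key : (inner ℝ (G x) f : ℝ) =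
      (inner ℝ (G xstar) fstar : ℝ) - (inner ℝ (G xstar) (fstar - f) : ℝ)
        + (inner ℝ (G x - G xstar) f : ℝ) := by
    simp only [inner_sub_left, inner_sub_right]; ring
  have h1 : |(inner ℝ (G xstar) (fstar - f) : ℝ)| ≤ ‖G xstar‖ * (C₃ * τ ^ p) := by
    refine le_trans (abs_real_inner_le_norm _ _) ?_
    exact mul_le_mul_of_nonneg_left hcons' hGnn
  have h2 : |(inner ℝ (G x - G xstar) f : ℝ)| ≤ (LG * (C₂ * τ ^ p)) * M₁ := by
    refine le_trans (abs_real_inner_le_norm _ _) ?_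
    have hGx : ‖G x - G xstar‖ ≤ LG * (C₂ * τ ^ p) :=
      le_trans (hGLip x xstar) (mul_le_mul_of_nonneg_left hxnorm hLG.le)
    have hf : ‖f‖ ≤ M₁ := hbd t y s z
    exact mul_le_mul hGx hf (norm_nonneg f) (by positivity)
  have habs1 := abs_le.mp h1
  have habs2 := abs_le.mp h2
  constructor
  · rw [key]
    have hKτ : K * τ ^ p = ‖G xstar‖ * (C₃ * τ ^ p) + LG * (C₂ * τ ^ p) * M₁ := by
      rw [hKdef]; ring
    linarith [habs1.1, habs1.2, habs2.1, htrans]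
  · exact hpos
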